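/- Let N ≥ 2, let α₁, …, α_N be real numbers and β₁, …, β_N be non-zero real numbers such that 0 ≤ min{β₁, α₁+β₁} < max{β₁, α₁+β₁} ≤ min{β₂, α₂+β₂} < max{β₂, α₂+β₂} ≤ ⋯ ≤ min{β_N, α_N+β_N} < max{β_N, α_N+β_N} ≤ 1 and ⋃_{n=1}^N [min{β_n, α_n+β_n}, max{β_n, α_n+β_n}] ≠ [0,1]. Put f_n(x) = α_n x + β_n for x ∈ [0,1], A₀ = [0,1], and A_m = ⋃_{n=1}^N f_n(A_{m−1}) for m ∈ ℕ. Then the attractor A_* = ⋂_{m∈ℕ} A_m of the iterated function system {f₁, …, f_N} has Lebesgue measure zero. -/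

import Mathlib

open MeasureTheory Filter Topology

lemma affine_image_eq (a b : ℝ) (ha : a ≠ 0) (s : Set ℝ) :
    (fun x => a * x + b) '' s = (fun y => a⁻¹ * (y - b)) ⁻¹' s := by
  ext y
  simp only [Set.mem_image, Set.mem_preimage]
  constructor
  · rintro ⟨x, hx, rfl⟩
    have : a⁻¹ * (a * x + b - b) = x := by field_simp; ring
    rwa [this]
  · intro h
    exact ⟨a⁻¹ * (y - b), h, by field_simp; ring⟩

lemma affine_image_volume (a b : ℝ) (ha : a ≠ 0) (s : Set ℝ) :
    volume ((fun x => a * x + b) '' s) = ENNReal.ofReal |a| * volume s := by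
  rw [affine_image_eq a b ha s]
  have : (fun y : ℝ => a⁻¹ * (y - b)) ⁻¹' s = (fun y : ℝ => y - b) ⁻¹' ((a⁻¹ * ·) ⁻¹' s) := by
    rfl
  rw [this]
  have h1 : volume ((fun y : ℝ => y - b) ⁻¹' ((a⁻¹ * ·) ⁻¹' s))
      = volume ((a⁻¹ * ·) ⁻¹' s) := by
    simpa [sub_eq_add_neg] using
      measure_preimage_add_right volume (-b) ((a⁻¹ * ·) ⁻¹' s)
  rw [h1, Real.volume_preimage_mul_left (inv_ne_zero ha), inv_inv]

/-- Let `N ≥ 2`, let `α₁, …, α_N` be reals and `β₁, …, β_N` non-zero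
reals such that the intervals `[min{βₙ, αₙ+βₙ}, max{βₙ, αₙ+βₙ}]` are nondegenerate,
pairwise ordered (the `n`-th lies to the left of the `m`-th for `n < m`), contained in
`[0,1]`, and their union is not all of `[0,1]`. Put `fₙ(x) = αₙ x + βₙ`, `A₀ = [0,1]` and
`A_m = ⋃ₙ fₙ(A_{m−1})`. Then the attractor `A_* = ⋂ₘ A_m` of the iterated function system
`{f₁, …, f_N}` has Lebesgue measure zero. -/
theorem stmt17 (N : ℕ) (hN : 2 ≤ N) (α β : Fin N → ℝ) (hβ : ∀ n, β n ≠ 0)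
    (h0 : ∀ n, 0 ≤ min (β n) (α n + β n))
    (h1 : ∀ n, max (β n) (α n + β n) ≤ 1)
    (hlt : ∀ n, min (β n) (α n + β n) < max (β n) (α n + β n))
    (horder : ∀ n m : Fin N, n < m →
      max (β n) (α n + β n) ≤ min (β m) (α m + β m))
    (hne : (⋃ n, Set.Icc (min (β n) (α n + β n)) (max (β n) (α n + β n))) ≠
      Set.Icc 0 1)
    (A : ℕ → Set ℝ) (hA0 : A 0 = Set.Icc 0 1)
    (hAsucc : ∀ m : ℕ, A (m + 1) = ⋃ n, (fun x => α n * x + β n) '' A m) :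
    volume (⋂ m, A m) = 0 := by
  set lo : Fin N → ℝ := fun n => min (β n) (α n + β n) with hlo
  set hi : Fin N → ℝ := fun n => max (β n) (α n + β n) with hhi
  have hα : ∀ n, α n ≠ 0 := by
    intro n hn
    have := hlt n
    rw [hn, zero_add] at this
    simp at this
  have habs : ∀ n, hi n - lo n = |α n| := by
    intro n
    simpa using max_sub_min_eq_abs (β n) (α n + β n)
  have hIvol : ∀ n, volume (Set.Icc (lo n) (hi n)) = ENNReal.ofReal |α n| := by
    intro n; rw [Real.volume_Icc, habs]
  set U : Set ℝ := ⋃ n, Set.Icc (lo n) (hi n) with hU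
  -- volume of the union is the sum
  have hdisj : Pairwise (Function.onFun (AEDisjoint volume) fun n => Set.Icc (lo n) (hi n)) := by
    intro n m hnm
    have key : ∀ p q : Fin N, p < q →
        volume (Set.Icc (lo p) (hi p) ∩ Set.Icc (lo q) (hi q)) = 0 := by
      intro p q hpq
      have hsub : Set.Icc (lo p) (hi p) ∩ Set.Icc (lo q) (hi q) ⊆
          Set.Icc (lo q) (hi p) := fun x hx => ⟨hx.2.1, hx.1.2⟩
      refine le_antisymm (le_trans (measure_mono hsub) ?_) zero_le
      rw [Real.volume_Icc]
      simp [ENNReal.ofReal_eq_zero, sub_nonpos.mpr (horder p q hpq)]; exact horder p q hpq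
    rcases lt_or_gt_of_ne hnm with h | h
    · exact key n m h
    · have h2 := key m n h
      rwa [Set.inter_comm] at h2
  have hCsum : volume U = ∑' n, ENNReal.ofReal |α n| := by
    rw [hU, measure_iUnion₀ hdisj (fun n => measurableSet_Icc.nullMeasurableSet)]
    exact tsum_congr hIvol
  -- volume U < 1
  have hUsub : U ⊆ Set.Icc (0 : ℝ) 1 := by
    rintro x hx
    rcases Set.mem_iUnion.mp hx with ⟨n, hn⟩
    exact ⟨le_trans (h0 n) hn.1, le_trans hn.2 (h1 n)⟩
  have hUclosed : IsClosed U := isClosed_iUnion_of_finite fun n => isClosed_Icc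
  obtain ⟨x, hx01, hxU⟩ : ∃ x, x ∈ Set.Icc (0:ℝ) 1 ∧ x ∉ U := by
    rcases Set.exists_of_ssubset (ssubset_of_ne_of_subset hne hUsub) with ⟨x, hx1, hx2⟩
    exact ⟨x, hx1, hx2⟩
  obtain ⟨ε, hε, hball⟩ : ∃ ε > 0, Metric.ball x ε ⊆ Uᶜ :=
    Metric.isOpen_iff.mp hUclosed.isOpen_compl x hxU
  set a := max 0 (x - ε/2) with ha
  set b := min 1 (x + ε/2) with hb
  have hab : a < b := by
    rcases hx01 with ⟨hx0, hx1⟩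
    apply max_lt <;> apply lt_min <;> linarith
  have hIccsub : Set.Icc a b ⊆ Uᶜ := by
    intro y hy
    apply hball
    rw [Metric.mem_ball, Real.dist_eq, abs_sub_lt_iff]
    have h1' := hy.1
    have h2' := hy.2
    have := le_max_right 0 (x - ε/2)
    have := min_le_right 1 (x + ε/2)
    constructor <;> linarith
  have hC1 : volume U < 1 := by
    have hd : Disjoint U (Set.Icc a b) :=
      Set.disjoint_left.mpr fun y hyU hyI => hIccsub hyI hyU
    have hle : volume U + volume (Set.Icc a b) ≤ 1 := by
      rw [← measure_union hd measurableSet_Icc]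
      have : U ∪ Set.Icc a b ⊆ Set.Icc (0:ℝ) 1 := by
        apply Set.union_subset hUsub
        intro y hy
        have := le_max_left 0 (x - ε/2)
        have := min_le_left 1 (x + ε/2)
        exact ⟨le_trans (le_max_left 0 _) hy.1, le_trans hy.2 (min_le_left 1 _)⟩
      calc volume (U ∪ Set.Icc a b) ≤ volume (Set.Icc (0:ℝ) 1) := measure_mono this
        _ = 1 := by simp [Real.volume_Icc]
    have hpos : 0 < volume (Set.Icc a b) := by
      rw [Real.volume_Icc]
      exact ENNReal.ofReal_pos.mpr (by linarith)
    by_contra h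
    push_neg at h
    have : (1 : ENNReal) < volume U + volume (Set.Icc a b) :=
      lt_of_lt_of_le (ENNReal.lt_add_right ENNReal.one_ne_top hpos.ne') (by
        exact add_le_add_left h _)
    exact absurd (lt_of_lt_of_le this hle) (lt_irrefl _)
  set C : ENNReal := volume U with hC
  -- induction bound
  have hbound : ∀ m, volume (A m) ≤ C ^ m := by
    intro m
    induction m with
    | zero => rw [hA0, Real.volume_Icc]; simp
    | succ m ih =>
      rw [hAsucc m]
      calc volume (⋃ n, (fun x => α n * x + β n) '' A m)
          ≤ ∑' n, volume ((fun x => α n * x + β n) '' A m) := measure_iUnion_le _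
        _ = ∑' n, ENNReal.ofReal |α n| * volume (A m) := by
            exact tsum_congr fun n => affine_image_volume (α n) (β n) (hα n) (A m)
        _ = (∑' n, ENNReal.ofReal |α n|) * volume (A m) := ENNReal.tsum_mul_right
        _ = C * volume (A m) := by rw [← hCsum, hC]
        _ ≤ C * C ^ m := mul_le_mul_right ih C
        _ = C ^ (m + 1) := (pow_succ' C m).symm
  have htend : Tendsto (fun m => C ^ m) atTop (𝓝 0) :=
    ENNReal.tendsto_pow_atTop_nhds_zero_of_lt_one hC1
  have : volume (⋂ m, A m) ≤ 0 :=
    ge_of_tendsto' htend fun m =>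
      le_trans (measure_mono (Set.iInter_subset A m)) (hbound m)
  exact le_antisymm this zero_le
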